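/- Let G be a non-abelian finite group admitting a GRR. Then G admits a 2-GRR. -/

import Mathlib

set_option linter.unusedSectionVars false

/-- A permutation `σ` of the vertex set is an automorphism of the simple graph `Γ`. -/
def IsGraphAut {V : Type*} (Γ : SimpleGraph V) (σ : Equiv.Perm V) : Prop :=
  ∀ u v : V, Γ.Adj (σ u) (σ v) ↔ Γ.Adj u v

/-- `G` admits an `m`-graphical regular representation: a regular finite simple graph whose
full automorphism group is (the image of) `G`, acting semiregularly with exactly `m` orbits. -/
def HasMGRR (G : Type*) [Group G] (m : ℕ) : Prop :=
  ∃ (V : Type) (_ : Fintype V) (Γ : SimpleGraph V) (ρ : G →* Equiv.Perm V),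
    (∃ d : ℕ, ∀ v : V, (Γ.neighborSet v).ncard = d) ∧
    (∀ g : G, IsGraphAut Γ (ρ g)) ∧
    (∀ σ : Equiv.Perm V, IsGraphAut Γ σ → ∃ g : G, ρ g = σ) ∧
    Function.Injective ⇑ρ ∧
    (∀ (g : G) (v : V), ρ g v = v → g = 1) ∧
    (∃ reps : Fin m → V, ∀ v : V, ∃! i : Fin m, ∃ g : G, ρ g (reps i) = v)

namespace Statement8


/-- triangles through a vertex, as ordered pairs -/
def tri {W : Type*} (Γ : SimpleGraph W) (v : W) : Set (W × W) :=
  {q | Γ.Adj v q.1 ∧ Γ.Adj v q.2 ∧ Γ.Adj q.1 q.2}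

lemma isGraphAut_inv {W : Type*} {Γ : SimpleGraph W} {σ : Equiv.Perm W}
    (hσ : IsGraphAut Γ σ) : IsGraphAut Γ σ⁻¹ := by
  intro u v
  have := hσ (σ⁻¹ u) (σ⁻¹ v)
  rw [Equiv.Perm.coe_inv, Equiv.apply_symm_apply, Equiv.apply_symm_apply] at this
  exact this.symm

lemma tri_map {W : Type*} (Γ : SimpleGraph W) (σ : Equiv.Perm W)
    (hσ : IsGraphAut Γ σ) (v : W) :
    tri Γ (σ v) = (Prod.map σ σ) '' tri Γ v := by
  ext ⟨x, y⟩
  constructor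
  · rintro ⟨h1, h2, h3⟩
    refine ⟨(σ⁻¹ x, σ⁻¹ y), ⟨?_, ?_, ?_⟩, by simp⟩
    · exact (hσ v (σ⁻¹ x)).mp (by rwa [Equiv.Perm.coe_inv, Equiv.apply_symm_apply])
    · exact (hσ v (σ⁻¹ y)).mp (by rwa [Equiv.Perm.coe_inv, Equiv.apply_symm_apply])
    · exact (hσ (σ⁻¹ x) (σ⁻¹ y)).mp
        (by rwa [Equiv.Perm.coe_inv, Equiv.apply_symm_apply, Equiv.apply_symm_apply])
  · rintro ⟨⟨x', y'⟩, ⟨h1, h2, h3⟩, heq⟩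
    simp only [Prod.map, Prod.mk.injEq] at heq
    obtain ⟨rfl, rfl⟩ := heq
    exact ⟨(hσ v x').mpr h1, (hσ v y').mpr h2, (hσ x' y').mpr h3⟩

lemma tri_ncard_map {W : Type*} (Γ : SimpleGraph W) (σ : Equiv.Perm W)
    (hσ : IsGraphAut Γ σ) (v : W) :
    (tri Γ (σ v)).ncard = (tri Γ v).ncard := by
  rw [tri_map Γ σ hσ v,
    Set.ncard_image_of_injective _ (σ.injective.prodMap σ.injective)]

lemma nbr_map {W : Type*} (Γ : SimpleGraph W) (σ : Equiv.Perm W)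
    (hσ : IsGraphAut Γ σ) (v : W) :
    Γ.neighborSet (σ v) = σ '' Γ.neighborSet v := by
  ext w
  constructor
  · intro h
    refine ⟨σ⁻¹ w, ?_, by simp⟩
    exact (hσ v (σ⁻¹ w)).mp (by rwa [Equiv.Perm.coe_inv, Equiv.apply_symm_apply])
  · rintro ⟨w', hw', rfl⟩
    exact (hσ v w').mpr hw'



variable {G : Type*} [Group G]

def adj2 (S T : Set G) : G × Bool → G × Bool → Prop
  | (u, false), (v, false) => u⁻¹ * v ∈ S
  | (u, false), (v, true) => u⁻¹ * v ∈ T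
  | (u, true), (v, false) => v⁻¹ * u ∈ T
  | (u, true), (v, true) => u⁻¹ * v ∈ S

@[simp] lemma adj2_ff {S T : Set G} {u v : G} :
    adj2 S T (u, false) (v, false) ↔ u⁻¹ * v ∈ S := Iff.rfl
@[simp] lemma adj2_ft {S T : Set G} {u v : G} :
    adj2 S T (u, false) (v, true) ↔ u⁻¹ * v ∈ T := Iff.rfl
@[simp] lemma adj2_tf {S T : Set G} {u v : G} :
    adj2 S T (u, true) (v, false) ↔ v⁻¹ * u ∈ T := Iff.rfl
@[simp] lemma adj2_tt {S T : Set G} {u v : G} :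
    adj2 S T (u, true) (v, true) ↔ u⁻¹ * v ∈ S := Iff.rfl

def graph2 (S T : Set G) (hS1 : (1 : G) ∉ S)
    (hSsym : ∀ s : G, s ∈ S → s⁻¹ ∈ S) : SimpleGraph (G × Bool) where
  Adj := adj2 S T
  symm := by
    constructor
    rintro ⟨u, _ | _⟩ ⟨v, _ | _⟩ h
    · have := hSsym _ h; rwa [mul_inv_rev, inv_inv] at this
    · exact h
    · exact h
    · have := hSsym _ h; rwa [mul_inv_rev, inv_inv] at this
  loopless := by
    constructor
    rintro ⟨u, _ | _⟩ h
    · simp at h; exact hS1 h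
    · simp at h; exact hS1 h

@[simp] lemma graph2_adj {S T : Set G} {hS1} {hSsym} {x y : G × Bool} :
    (graph2 S T hS1 hSsym).Adj x y ↔ adj2 S T x y := Iff.rfl

def hom2 : G →* Equiv.Perm (G × Bool) where
  toFun g := Equiv.prodCongr (Equiv.mulLeft g) (Equiv.refl Bool)
  map_one' := by
    apply Equiv.ext; rintro ⟨u, i⟩; simp
  map_mul' g h := by
    apply Equiv.ext; rintro ⟨u, i⟩; simp [mul_assoc]

@[simp] lemma hom2_apply (g u : G) (i : Bool) : hom2 g (u, i) = (g * u, i) := rfl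

lemma isGraphAut_hom2 (S T : Set G) (hS1 : (1 : G) ∉ S)
    (hSsym : ∀ s : G, s ∈ S → s⁻¹ ∈ S) (g : G) :
    IsGraphAut (graph2 S T hS1 hSsym) (hom2 g) := by
  rintro ⟨u, _ | _⟩ ⟨v, _ | _⟩ <;>
    simp [mul_inv_rev, mul_assoc]



variable {G : Type*} [Group G]

def Tset (a b : G) : Set G := {1, a, b}

@[simp] lemma mem_Tset {a b x : G} : x ∈ Tset a b ↔ x = 1 ∨ x = a ∨ x = b := by
  simp [Tset]

section facts
variable {S : Set G} {p a b : G}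
variable (hS1 : (1 : G) ∉ S) (hSsym : ∀ s : G, s ∈ S → s⁻¹ ∈ S)
variable (hp : p ∈ S) (hpa : a⁻¹ * p * a ∉ S) (hb : b = p⁻¹ * a)

include hp hpa in
lemma ha1 : a ≠ 1 := by
  rintro rfl; apply hpa; simpa using hp

include hp hpa hb in
lemma hb1 : b ≠ 1 := by
  intro h
  have h2 : p⁻¹ * a = 1 := by rw [← hb, h]
  have h3 : p = a := inv_mul_eq_one.mp h2
  apply hpa
  have : a⁻¹ * p * a = p := by rw [h3, inv_mul_cancel, one_mul]
  rw [this]; exact hp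

include hS1 hp hb in
lemma hab : a ≠ b := by
  intro h
  have h2 : (1 : G) = p⁻¹ := mul_right_cancel (b := a) (by rw [one_mul, ← hb, ← h])
  have h3 : p = 1 := inv_eq_one.mp h2.symm
  exact hS1 (h3 ▸ hp)

include hpa hb in
lemma hbA : b⁻¹ * a ∉ S := by
  rw [hb, mul_inv_rev, inv_inv]
  exact hpa

include hSsym hpa hb in
lemma haB : a⁻¹ * b ∉ S := by
  intro h
  have h2 := hSsym _ h
  rw [mul_inv_rev, inv_inv] at h2
  exact hbA hpa hb h2

include hSsym hpa hb in
lemma l9 : ∀ t₁ ∈ Tset a b, ∀ t₂ ∈ Tset a b, t₁⁻¹ * t₂ ∈ S → t₂ * t₁⁻¹ ∈ S := by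
  intro t₁ ht₁ t₂ ht₂ h
  rw [mem_Tset] at ht₁ ht₂
  rcases ht₁ with h1 | h1 | h1 <;> rcases ht₂ with h2 | h2 | h2 <;>
    rw [h1, h2] at h ⊢ <;>
    first
      | simpa using h
      | exact absurd (by simpa using h) (haB hSsym hpa hb)
      | exact absurd (by simpa using h) (hbA hpa hb)

include hS1 hSsym hp hpa hb in
lemma stab (m : G) (hm : ∀ w : G, w ∈ Tset a b ↔ m * w ∈ Tset a b) : m = 1 := by
  have ha1' : a ≠ 1 := ha1 hp hpa
  have hb1' : b ≠ 1 := hb1 hp hpa hb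
  have hmT : m ∈ Tset a b := by
    have := (hm 1).mp (by simp)
    simpa using this
  rw [mem_Tset] at hmT
  rcases hmT with h | h | h
  · exact h
  · -- m = a
    exfalso
    rw [h] at hm
    have hab2 : a * b ∈ Tset a b := (hm b).mp (by simp)
    rw [mem_Tset] at hab2
    rcases hab2 with h1 | h1 | h1
    · -- a * b = 1
      have hbinv : b = a⁻¹ := by rw [← inv_mul_cancel_left a b, h1, mul_one]
      have h2 : p⁻¹ * a = a⁻¹ := by rw [← hb, hbinv]
      have h3 : p = a * a := by
        have h4 : p⁻¹ = a⁻¹ * a⁻¹ := by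
          rw [← mul_inv_cancel_right p⁻¹ a, h2]
        rw [← inv_inv p, h4, mul_inv_rev, inv_inv]
      apply hpa
      have : a⁻¹ * p * a = p := by
        rw [h3, ← mul_assoc, inv_mul_cancel, one_mul]
      rw [this]; exact hp
    · exact hb1' (mul_left_cancel (a := a) (by rw [h1, mul_one]))
    · exact ha1' (mul_right_cancel (b := b) (by rw [h1, one_mul]))
  · -- m = b
    exfalso
    rw [h] at hm
    have hba2 : b * a ∈ Tset a b := (hm a).mp (by simp)
    rw [mem_Tset] at hba2
    rcases hba2 with h1 | h1 | h1
    · -- b * a = 1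
      have hainv : a = b⁻¹ := by rw [← inv_mul_cancel_left b a, h1, mul_one]
      have h2 : b = p⁻¹ * b⁻¹ := by
        conv_lhs => rw [hb]
        rw [hainv]
      have h4 : p⁻¹ = b * b := by
        rw [← inv_mul_cancel_right p⁻¹ b, ← h2]
      have h3 : p = b⁻¹ * b⁻¹ := by
        rw [← inv_inv p, h4, mul_inv_rev]
      apply hpa
      have : a⁻¹ * p * a = p := by
        rw [hainv, inv_inv, h3, ← mul_assoc, mul_inv_cancel, one_mul]
      rw [this]; exact hp
    · exact hb1' (mul_right_cancel (b := a) (by rw [h1, one_mul]))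
    · exact ha1' (mul_left_cancel (a := b) (by rw [h1, mul_one]))


end facts

section counting
variable [Finite G]
variable {S : Set G} {p a b : G}
variable (hS1 : (1 : G) ∉ S) (hSsym : ∀ s : G, s ∈ S → s⁻¹ ∈ S)
variable (hp : p ∈ S) (hpa : a⁻¹ * p * a ∉ S) (hb : b = p⁻¹ * a)

def jmap : (G × Bool) × (G × Bool) → (G × Bool) × (G × Bool)
  | ((u, true), (v, true)) => ((u, false), (v, false))
  | ((u, false), (v, false)) => ((u⁻¹ * v, false), (u⁻¹, true))
  | ((u, false), (v, true)) => ((u⁻¹, true), (u⁻¹ * v, true))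
  | ((u, true), (v, false)) => ((v⁻¹ * u, true), (v⁻¹ * u * v, false))

lemma jmap_inj : Function.Injective (jmap (G := G)) := by
  rintro ⟨⟨u, i⟩, ⟨v, j⟩⟩ ⟨⟨u', i'⟩, ⟨v', j'⟩⟩ h
  cases i <;> cases j <;> cases i' <;> cases j' <;>
    simp only [jmap, Prod.mk.injEq, and_true, true_and, and_false, false_and,
      Bool.true_eq_false, Bool.false_eq_true] at h ⊢
  · obtain ⟨h1, h2⟩ := h
    obtain rfl : u = u' := inv_injective h2
    exact ⟨rfl, mul_left_cancel h1⟩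
  · obtain ⟨h1, h2⟩ := h
    obtain rfl : u = u' := inv_injective h1
    exact ⟨rfl, mul_left_cancel h2⟩
  · obtain ⟨h1, h2⟩ := h
    rw [← h1] at h2
    obtain rfl : v = v' := mul_left_cancel h2
    exact ⟨mul_left_cancel h1, rfl⟩
  · exact h

include hS1 hSsym hpa hb in
lemma jmap_mem_tri :
    ∀ q ∈ tri (graph2 S (Tset a b) hS1 hSsym) ((1 : G), true),
      jmap q ∈ tri (graph2 S (Tset a b) hS1 hSsym) ((1 : G), false) := by
  rintro ⟨⟨u, i⟩, ⟨v, j⟩⟩ ⟨h1, h2, h3⟩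
  cases i <;> cases j <;>
    simp only [tri, graph2_adj, Set.mem_setOf_eq, jmap, adj2_ff, adj2_ft, adj2_tf, adj2_tt,
      inv_one, one_mul, mul_one] at h1 h2 h3 ⊢
  · -- u,v in layer false : u⁻¹ ∈ T, v⁻¹ ∈ T, u⁻¹ v ∈ S
    refine ⟨h3, h1, ?_⟩
    have : (u⁻¹ * v)⁻¹ * u⁻¹ = v⁻¹ := by
      rw [mul_inv_rev, inv_inv, mul_assoc, mul_inv_cancel, mul_one]
    rw [this]; exact h2
  · -- u false, v true : u⁻¹ ∈ T, v ∈ S, u⁻¹ v ∈ T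
    refine ⟨h1, h3, ?_⟩
    have : (u⁻¹)⁻¹ * (u⁻¹ * v) = v := by
      rw [inv_inv, ← mul_assoc, mul_inv_cancel, one_mul]
    rw [this]; exact h2
  · -- u true, v false : u ∈ S, v⁻¹ ∈ T, v⁻¹ u ∈ T
    refine ⟨h3, ?_, ?_⟩
    · have hl9 := l9 hSsym hpa hb v⁻¹ h2 (v⁻¹ * u) h3
      have heq : (v⁻¹)⁻¹ * (v⁻¹ * u) = u := by
        rw [inv_inv, ← mul_assoc, mul_inv_cancel, one_mul]
      rw [heq] at hl9
      have heq2 : v⁻¹ * u * v⁻¹⁻¹ = v⁻¹ * u * v := by rw [inv_inv]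
      rw [heq2] at hl9
      exact hl9 h1
    · have : (v⁻¹ * u * v)⁻¹ * (v⁻¹ * u) = v⁻¹ := by
        rw [mul_inv_rev, mul_inv_rev, inv_inv]
        calc v⁻¹ * (u⁻¹ * v) * (v⁻¹ * u) = v⁻¹ * (u⁻¹ * (v * v⁻¹) * u) := by
              simp [mul_assoc]
          _ = v⁻¹ := by simp
      rw [this]; exact h2
  · -- u,v in layer true : u ∈ S, v ∈ S, u⁻¹ v ∈ S
    exact ⟨h1, h2, h3⟩

include hS1 hSsym hp hpa hb in
lemma E0_mem :
    ((a, true), (p, false)) ∈ tri (graph2 S (Tset a b) hS1 hSsym) ((1 : G), false) := by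
  refine ⟨?_, ?_, ?_⟩ <;>
    simp only [tri, graph2_adj, Set.mem_setOf_eq, adj2_ff, adj2_ft, adj2_tf, adj2_tt,
      inv_one, one_mul, mul_one]
  · simp
  · exact hp
  · rw [← hb]; simp

include hpa in
lemma E0_notin :
    ((a, true), (p, false)) ∉ jmap '' tri (graph2 S (Tset a b) hS1 hSsym) ((1 : G), true) := by
  rintro ⟨⟨⟨u, i⟩, ⟨v, j⟩⟩, hmem, heq⟩
  cases i <;> cases j <;>
    simp only [jmap, Prod.mk.injEq, and_true, true_and, and_false, false_and,
      Bool.true_eq_false, Bool.false_eq_true] at heq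
  obtain ⟨h1, h2⟩ := heq
  obtain ⟨hm1, hm2, hm3⟩ := hmem
  simp only [graph2_adj, adj2_tt, inv_one, one_mul] at hm1
  -- hm1 : u ∈ S ; h1 : v⁻¹ * u = a ; h2 : v⁻¹ * u * v = p
  apply hpa
  have hu : u = v * a := by rw [← h1, mul_inv_cancel_left]
  have hv : v = a⁻¹ * p := by
    rw [h1] at h2
    rw [← h2, inv_mul_cancel_left]
  rw [hv] at hu
  exact hu ▸ hm1

include hS1 hSsym hp hpa hb in
lemma tri_lt :
    (tri (graph2 S (Tset a b) hS1 hSsym) ((1 : G), true)).ncard <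
      (tri (graph2 S (Tset a b) hS1 hSsym) ((1 : G), false)).ncard := by
  have h1 : (tri (graph2 S (Tset a b) hS1 hSsym) ((1 : G), true)).ncard
      = (jmap '' tri (graph2 S (Tset a b) hS1 hSsym) ((1 : G), true)).ncard :=
    (Set.ncard_image_of_injective _ jmap_inj).symm
  have hsub : jmap '' tri (graph2 S (Tset a b) hS1 hSsym) ((1 : G), true)
      ⊆ tri (graph2 S (Tset a b) hS1 hSsym) ((1 : G), false) \ {((a, true), (p, false))} := by
    rintro q ⟨q0, hq0, rfl⟩
    refine ⟨jmap_mem_tri hS1 hSsym hpa hb q0 hq0, ?_⟩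
    intro hq
    rw [Set.mem_singleton_iff] at hq
    exact E0_notin hS1 hSsym hpa ⟨q0, hq0, hq⟩
  calc (tri (graph2 S (Tset a b) hS1 hSsym) ((1 : G), true)).ncard
      = _ := h1
    _ ≤ (tri (graph2 S (Tset a b) hS1 hSsym) ((1 : G), false)
          \ {((a, true), (p, false))}).ncard := Set.ncard_le_ncard hsub (Set.toFinite _)
    _ < (tri (graph2 S (Tset a b) hS1 hSsym) ((1 : G), false)).ncard :=
        Set.ncard_diff_singleton_lt_of_mem (E0_mem hS1 hSsym hp hpa hb) (Set.toFinite _)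

end counting

section full
variable [Finite G]
variable {S : Set G} {p a b : G}
variable (hS1 : (1 : G) ∉ S) (hSsym : ∀ s : G, s ∈ S → s⁻¹ ∈ S)
variable (hp : p ∈ S) (hpa : a⁻¹ * p * a ∉ S) (hb : b = p⁻¹ * a)

include hS1 hSsym hp hpa hb in
lemma layer_pres (σ : Equiv.Perm (G × Bool))
    (hσ : IsGraphAut (graph2 S (Tset a b) hS1 hSsym) σ) :
    ∀ x : G × Bool, (σ x).2 = x.2 := by
  have hconst : ∀ (w : G) (k : Bool),
      (tri (graph2 S (Tset a b) hS1 hSsym) (w, k)).ncard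
        = (tri (graph2 S (Tset a b) hS1 hSsym) ((1 : G), k)).ncard := by
    intro w k
    have h0 : (w, k) = hom2 w ((1 : G), k) := by simp
    rw [h0, tri_ncard_map _ _ (isGraphAut_hom2 S (Tset a b) hS1 hSsym w)]
  rintro ⟨u, i⟩
  rcases hx : σ (u, i) with ⟨w, k⟩
  have h2 : (tri (graph2 S (Tset a b) hS1 hSsym) ((1 : G), k)).ncard
      = (tri (graph2 S (Tset a b) hS1 hSsym) ((1 : G), i)).ncard := by
    rw [← hconst w k, ← hconst u i, ← hx, tri_ncard_map _ _ hσ]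
  show k = i
  have hlt := tri_lt hS1 hSsym hp hpa hb
  cases i <;> cases k
  · rfl
  · exact absurd h2 (Nat.ne_of_lt hlt)
  · exact absurd h2 (Nat.ne_of_gt hlt)
  · rfl

include hS1 hSsym hp hpa hb in
lemma full_aut
    (hTrans : ∀ f : G ≃ G, (∀ u v : G, u⁻¹ * v ∈ S ↔ (f u)⁻¹ * f v ∈ S) →
      ∃ x : G, ∀ u, f u = x * u)
    (σ : Equiv.Perm (G × Bool))
    (hσ : IsGraphAut (graph2 S (Tset a b) hS1 hSsym) σ) :
    ∃ g : G, hom2 g = σ := by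
  have hσ' : IsGraphAut (graph2 S (Tset a b) hS1 hSsym) σ⁻¹ := isGraphAut_inv hσ
  have hl := layer_pres hS1 hSsym hp hpa hb σ hσ
  have hl' := layer_pres hS1 hSsym hp hpa hb σ⁻¹ hσ'
  have hpair : ∀ (u : G) (i : Bool), σ (u, i) = ((σ (u, i)).1, i) := by
    intro u i
    exact Prod.ext rfl (hl (u, i))
  have hpair' : ∀ (u : G) (i : Bool), σ⁻¹ (u, i) = ((σ⁻¹ (u, i)).1, i) := by
    intro u i
    exact Prod.ext rfl (hl' (u, i))
  have hfgE : ∀ i : Bool, ∃ f : G ≃ G, ∀ u : G, f u = (σ (u, i)).1 := by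
    intro i
    refine ⟨⟨fun u => (σ (u, i)).1, fun u => (σ⁻¹ (u, i)).1, ?_, ?_⟩, fun u => rfl⟩
    · intro u
      show (σ⁻¹ ((σ (u, i)).1, i)).1 = u
      rw [← hpair u i, Equiv.Perm.coe_inv, Equiv.symm_apply_apply]
    · intro u
      show (σ ((σ⁻¹ (u, i)).1, i)).1 = u
      rw [← hpair' u i, Equiv.Perm.coe_inv, Equiv.apply_symm_apply]
  obtain ⟨fE, hfE⟩ := hfgE false
  obtain ⟨gE, hgE⟩ := hfgE true
  have hfS : ∀ u v : G, u⁻¹ * v ∈ S ↔ (fE u)⁻¹ * fE v ∈ S := by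
    intro u v
    have h := hσ (u, false) (v, false)
    rw [hpair u false, hpair v false] at h
    rw [hfE u, hfE v]
    simpa using h.symm
  have hgS : ∀ u v : G, u⁻¹ * v ∈ S ↔ (gE u)⁻¹ * gE v ∈ S := by
    intro u v
    have h := hσ (u, true) (v, true)
    rw [hpair u true, hpair v true] at h
    rw [hgE u, hgE v]
    simpa using h.symm
  obtain ⟨x, hx⟩ := hTrans fE hfS
  obtain ⟨y, hy⟩ := hTrans gE hgS
  have hbet : ∀ w : G, w ∈ Tset a b ↔ (x⁻¹ * y) * w ∈ Tset a b := by
    intro w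
    have h := hσ ((1 : G), false) (w, true)
    rw [hpair 1 false, hpair w true] at h
    simp only [graph2_adj, adj2_ft, inv_one, one_mul] at h
    have e1 : (σ ((1 : G), false)).1 = x := by rw [← hfE 1, hx 1, mul_one]
    have e2 : (σ (w, true)).1 = y * w := by rw [← hgE w, hy w]
    rw [e1, e2, ← mul_assoc] at h
    exact h.symm
  have hc : x⁻¹ * y = 1 := stab hS1 hSsym hp hpa hb (x⁻¹ * y) hbet
  have hxy : y = x := (inv_mul_eq_one.mp hc).symm
  refine ⟨x, Equiv.ext ?_⟩
  rintro ⟨u, _ | _⟩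
  · have h5 : σ (u, false) = (x * u, false) := by
      rw [hpair u false, ← hfE u, hx u]
    rw [h5]; rfl
  · have h6 : σ (u, true) = (x * u, true) := by
      rw [hpair u true, ← hgE u, hy u, hxy]
    rw [h6]; rfl

include hS1 hSsym in
lemma reg2 :
    ∀ x : G × Bool, ((graph2 S (Tset a b) hS1 hSsym).neighborSet x).ncard
      = ((graph2 S (Tset a b) hS1 hSsym).neighborSet ((1 : G), false)).ncard := by
  have htrans : ∀ (u : G) (i : Bool),
      ((graph2 S (Tset a b) hS1 hSsym).neighborSet (u, i)).ncard
        = ((graph2 S (Tset a b) hS1 hSsym).neighborSet ((1 : G), i)).ncard := by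
    intro u i
    have h0 : (u, i) = hom2 u ((1 : G), i) := by simp
    rw [h0, nbr_map _ _ (isGraphAut_hom2 S (Tset a b) hS1 hSsym u),
      Set.ncard_image_of_injective _ (Equiv.injective _)]
  have hinv : Function.LeftInverse (fun y : G × Bool => (y.1⁻¹, !y.2))
      (fun y : G × Bool => (y.1⁻¹, !y.2)) := by
    rintro ⟨w, j⟩; simp
  let ι : (G × Bool) ≃ (G × Bool) :=
    ⟨fun y => (y.1⁻¹, !y.2), fun y => (y.1⁻¹, !y.2), hinv, hinv⟩
  have hιs : ∀ y : G × Bool, ι.symm y = (y.1⁻¹, !y.2) := fun _ => rfl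
  have himg : (graph2 S (Tset a b) hS1 hSsym).neighborSet ((1 : G), true)
      = ι '' (graph2 S (Tset a b) hS1 hSsym).neighborSet ((1 : G), false) := by
    ext ⟨w, j⟩
    rw [Set.mem_image_equiv, hιs]
    cases j
    · -- (w,false) ∈ nbr(1,true) ↔ (w⁻¹,true) ∈ nbr(1,false)
      simp only [SimpleGraph.mem_neighborSet, graph2_adj, adj2_tf, adj2_ft,
        inv_one, one_mul, mul_one, Bool.not_false]
    · -- (w,true) ∈ nbr(1,true) : w ∈ S  ↔ (w⁻¹,false) ∈ nbr(1,false) : w⁻¹ ∈ S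
      simp only [SimpleGraph.mem_neighborSet, graph2_adj, adj2_tt, adj2_ff,
        inv_one, one_mul, Bool.not_true]
      constructor
      · exact fun h => hSsym _ h
      · intro h
        have := hSsym _ h
        rwa [inv_inv] at this
  rintro ⟨u, _ | _⟩
  · exact htrans u false
  · rw [htrans u true, himg, Set.ncard_image_of_injective _ (Equiv.injective _)]

end full

end Statement8

/-- a non-abelian finite group admitting a GRR admits a 2-GRR. -/
theorem statement_8 (G : Type*) [Group G] [Finite G]
    (hG : ¬ ∀ a b : G, a * b = b * a)
    (hGRR : HasMGRR G 1) :
    HasMGRR G 2 := by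
  classical
  obtain ⟨V, fV, Γ, ρ, _hreg, hAut, hFull, _hInj, hSemi, reps, hOrb⟩ := hGRR
  letI := fV
  have hsurj : Function.Surjective (fun g : G => ρ g (reps 0)) := by
    intro v
    obtain ⟨i, ⟨g, hg⟩, _⟩ := hOrb v
    exact ⟨g, by rw [Subsingleton.elim (0 : Fin 1) i]; exact hg⟩
  have hinj : Function.Injective (fun g : G => ρ g (reps 0)) := by
    intro g h hgh
    simp only at hgh
    have h2 : ρ (h⁻¹ * g) (reps 0) = reps 0 := by
      rw [map_mul, Equiv.Perm.mul_apply, hgh, ← Equiv.Perm.mul_apply, ← map_mul,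
        inv_mul_cancel, map_one, Equiv.Perm.one_apply]
    exact (inv_mul_eq_one.mp (hSemi _ _ h2)).symm
  let φE : G ≃ V := Equiv.ofBijective _ ⟨hinj, hsurj⟩
  have hφ : ∀ g : G, φE g = ρ g (reps 0) := fun _ => rfl
  set Sset : Set G := {s : G | Γ.Adj (reps 0) (ρ s (reps 0))} with hSdef
  have key1 : ∀ u v : G, Γ.Adj (ρ u (reps 0)) (ρ v (reps 0)) ↔ u⁻¹ * v ∈ Sset := by
    intro u v
    have h := hAut u (reps 0) (ρ (u⁻¹ * v) (reps 0))
    have e1 : ρ u (ρ (u⁻¹ * v) (reps 0)) = ρ v (reps 0) := by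
      rw [← Equiv.Perm.mul_apply, ← map_mul, mul_inv_cancel_left]
    rw [e1] at h
    exact h
  have hS1 : (1 : G) ∉ Sset := by
    intro h
    rw [hSdef, Set.mem_setOf_eq, map_one, Equiv.Perm.one_apply] at h
    exact Γ.irrefl h
  have hSsym : ∀ s : G, s ∈ Sset → s⁻¹ ∈ Sset := by
    intro s hs
    have h1 : Γ.Adj (ρ s (reps 0)) (ρ 1 (reps 0)) := by
      rw [map_one, Equiv.Perm.one_apply]
      exact (hs : Γ.Adj _ _).symm
    have h2 := (key1 s 1).mp h1
    rwa [mul_one] at h2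
  have hTrans : ∀ f : G ≃ G, (∀ u v : G, u⁻¹ * v ∈ Sset ↔ (f u)⁻¹ * f v ∈ Sset) →
      ∃ x : G, ∀ u, f u = x * u := by
    intro f hf
    have hσaut : IsGraphAut Γ (φE.symm.trans (f.trans φE)) := by
      intro w1 w2
      obtain ⟨u1, rfl⟩ := φE.surjective w1
      obtain ⟨u2, rfl⟩ := φE.surjective w2
      have e1 : (φE.symm.trans (f.trans φE)) (φE u1) = φE (f u1) := by
        simp [Equiv.trans_apply]
      have e2 : (φE.symm.trans (f.trans φE)) (φE u2) = φE (f u2) := by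
        simp [Equiv.trans_apply]
      rw [e1, e2, hφ, hφ, hφ, hφ, key1, key1]
      exact (hf u1 u2).symm
    obtain ⟨x, hxσ⟩ := hFull _ hσaut
    refine ⟨x, fun u => ?_⟩
    have h3 : ρ x (φE u) = φE (f u) := by
      rw [hxσ]; simp [Equiv.trans_apply]
    have h4 : ρ x (φE u) = φE (x * u) := by
      rw [hφ, hφ, ← Equiv.Perm.mul_apply, ← map_mul]
    exact φE.injective (h3.symm.trans h4)
  have hPA : ∃ pp aa : G, pp ∈ Sset ∧ aa⁻¹ * pp * aa ∉ Sset := by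
    by_contra hcon
    push_neg at hcon
    apply hG
    intro α β
    have hf : ∀ u v : G,
        u⁻¹ * v ∈ Sset ↔ ((Equiv.mulRight β) u)⁻¹ * (Equiv.mulRight β) v ∈ Sset := by
      intro u v
      simp only [Equiv.coe_mulRight]
      have e1 : (u * β)⁻¹ * (v * β) = β⁻¹ * (u⁻¹ * v) * β := by
        simp [mul_assoc]
      rw [e1]
      constructor
      · intro h
        exact hcon _ β h
      · intro h
        have h2 := hcon _ β⁻¹ h
        have e2 : β⁻¹⁻¹ * (β⁻¹ * (u⁻¹ * v) * β) * β⁻¹ = u⁻¹ * v := by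
          simp [mul_assoc]
        rwa [e2] at h2
    obtain ⟨x, hx⟩ := hTrans (Equiv.mulRight β) hf
    have hβx : β = x := by
      have := hx 1
      simpa using this
    have hαβ : α * β = x * α := hx α
    rw [hαβ, hβx]
  obtain ⟨pp, aa, hpp, hppa⟩ := hPA
  set bb : G := pp⁻¹ * aa with hbb
  let G2 := Statement8.graph2 Sset (Statement8.Tset aa bb) hS1 hSsym
  let e : (G × Bool) ≃ (V × Bool) := φE.prodCongr (Equiv.refl Bool)
  let Γ' : SimpleGraph (V × Bool) :=
    { Adj := fun x y => G2.Adj (e.symm x) (e.symm y),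
      symm := ⟨fun x y h => G2.symm.symm _ _ h⟩,
      loopless := ⟨fun x h => G2.loopless.irrefl _ h⟩ }
  let ρ' : G →* Equiv.Perm (V × Bool) :=
    { toFun := fun g => e.permCongr (Statement8.hom2 g),
      map_one' := by
        apply Equiv.ext; intro x
        simp
      map_mul' := by
        intro g h
        apply Equiv.ext; intro x
        simp [Equiv.Perm.mul_apply] }
  have hρ' : ∀ (g : G) (x : V × Bool), ρ' g x = e (Statement8.hom2 g (e.symm x)) :=
    fun _ _ => rfl
  have happly : ∀ (g w : G) (j : Bool), ρ' g (e (w, j)) = e (g * w, j) := by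
    intro g w j
    rw [hρ', Equiv.symm_apply_apply]
    rfl
  have hj2 : ∀ jj : Fin 2, jj = 0 ∨ jj = 1 := by decide
  refine ⟨V × Bool, inferInstance, Γ', ρ', ?_, ?_, ?_, ?_, ?_, ?_⟩
  · -- regular
    refine ⟨(G2.neighborSet ((1 : G), false)).ncard, ?_⟩
    intro v
    have himg : Γ'.neighborSet v = e '' G2.neighborSet (e.symm v) := by
      ext w
      rw [Set.mem_image_equiv]
      exact Iff.rfl
    rw [himg, Set.ncard_image_of_injective _ (Equiv.injective _)]
    exact Statement8.reg2 hS1 hSsym (e.symm v)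
  · -- automorphisms
    intro g x y
    have e3 : ∀ z : V × Bool, e.symm (ρ' g z) = Statement8.hom2 g (e.symm z) := by
      intro z; rw [hρ', Equiv.symm_apply_apply]
    have h1 := Statement8.isGraphAut_hom2 Sset (Statement8.Tset aa bb) hS1 hSsym g
      (e.symm x) (e.symm y)
    show G2.Adj (e.symm (ρ' g x)) (e.symm (ρ' g y)) ↔ G2.Adj (e.symm x) (e.symm y)
    rw [e3 x, e3 y]
    exact h1
  · -- fullness
    intro σ' hσ'
    let σ : Equiv.Perm (G × Bool) := (e.trans σ').trans e.symm
    have hσz : ∀ z : G × Bool, σ z = e.symm (σ' (e z)) := fun _ => rfl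
    have hσaut : IsGraphAut G2 σ := by
      intro z1 z2
      have h1 := hσ' (e z1) (e z2)
      show G2.Adj (σ z1) (σ z2) ↔ G2.Adj z1 z2
      constructor
      · intro h
        have h2 : Γ'.Adj (σ' (e z1)) (σ' (e z2)) := h
        have h3 : G2.Adj (e.symm (e z1)) (e.symm (e z2)) := h1.mp h2
        rwa [Equiv.symm_apply_apply, Equiv.symm_apply_apply] at h3
      · intro h
        have h3 : G2.Adj (e.symm (e z1)) (e.symm (e z2)) := by
          rwa [Equiv.symm_apply_apply, Equiv.symm_apply_apply]
        exact h1.mpr h3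
    obtain ⟨g, hg⟩ := Statement8.full_aut hS1 hSsym hpp hppa hbb hTrans σ hσaut
    refine ⟨g, Equiv.ext fun x => ?_⟩
    rw [hρ', hg, hσz, Equiv.apply_symm_apply, Equiv.apply_symm_apply]
  · -- injective
    intro g h hgh
    have h1 : ρ' g (e ((1 : G), false)) = ρ' h (e ((1 : G), false)) := by rw [hgh]
    rw [happly, happly] at h1
    have h2 := e.injective h1
    have h3 : g * 1 = h * 1 := congrArg Prod.fst h2
    simpa using h3
  · -- semiregular
    intro g v hv
    obtain ⟨⟨u, i⟩, rfl⟩ := e.surjective v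
    rw [happly] at hv
    have h2 := e.injective hv
    have h3 : g * u = u := congrArg Prod.fst h2
    exact mul_right_cancel (b := u) (by rw [h3, one_mul])
  · -- two orbits
    refine ⟨![e ((1 : G), false), e ((1 : G), true)], ?_⟩
    intro v
    obtain ⟨⟨u, i⟩, rfl⟩ := e.surjective v
    cases i
    · refine ⟨0, ⟨u, ?_⟩, ?_⟩
      · show ρ' u ((![e ((1 : G), false), e ((1 : G), true)]) 0) = e (u, false)
        rw [Matrix.cons_val_zero, happly, mul_one]
      · rintro j ⟨g, hgj⟩
        rcases hj2 j with rfl | rfl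
        · rfl
        · exfalso
          rw [show (![e ((1 : G), false), e ((1 : G), true)]) 1 = e ((1 : G), true) from rfl,
            happly] at hgj
          have h4 := congrArg Prod.snd (e.injective hgj)
          simp at h4
    · refine ⟨1, ⟨u, ?_⟩, ?_⟩
      · show ρ' u ((![e ((1 : G), false), e ((1 : G), true)]) 1) = e (u, true)
        rw [show (![e ((1 : G), false), e ((1 : G), true)]) 1 = e ((1 : G), true) from rfl,
          happly, mul_one]
      · rintro j ⟨g, hgj⟩
        rcases hj2 j with rfl | rfl
        · exfalso
          rw [Matrix.cons_val_zero, happly] at hgj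
          have h4 := congrArg Prod.snd (e.injective hgj)
          simp at h4
        · rfl
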